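/- arXiv:0911.1677 — 5 statements merged into one kernel-verified Lean document; each statement's English description precedes it below -/
import Mathlib

section
/- Let R be a finite nontrivial Boolean ring with |R| = 2^N. Then the number of logical primes in R is exactly N. -/
/-- An element `p` of a Boolean ring is a logical prime if `p ≠ 1` and
`p * a = 0` implies `a = 0` or `a = 1 + p`. -/
def IsLogicalPrime {R : Type*} [BooleanRing R] (p : R) : Prop :=
  p ≠ 1 ∧ ∀ a : R, p * a = 0 → a = 0 ∨ a = 1 + p

section Aux
variable {R : Type*} [BooleanRing R]

def IsRingAtom (a : R) : Prop :=
  a ≠ 0 ∧ ∀ b : R, b * a = b → b = 0 ∨ b = a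

lemma mul_eq_zero_iff_mul_compl (p a : R) : p * a = 0 ↔ a * (1 + p) = a := by
  rw [mul_add, mul_one, add_eq_left, mul_comm]

lemma isLogicalPrime_iff (p : R) : IsLogicalPrime p ↔ IsRingAtom (1 + p) := by
  have h1 : (1 : R) + p = 0 ↔ p = 1 := by
    rw [BooleanRing.add_eq_zero']; exact eq_comm
  constructor
  · rintro ⟨hp1, hp⟩
    exact ⟨fun h => hp1 (h1.mp h), fun b hb => hp b ((mul_eq_zero_iff_mul_compl p b).mpr hb)⟩
  · rintro ⟨hne, hb⟩
    exact ⟨fun h => hne (h1.mpr h), fun a ha => hb a ((mul_eq_zero_iff_mul_compl p a).mp ha)⟩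

variable [Fintype R]

open Finset

lemma exists_atom_below : ∀ x : R, x ≠ 0 → ∃ a : R, IsRingAtom a ∧ a * x = a := by
  classical
  have key : ∀ n : ℕ, ∀ x : R, (univ.filter (fun y : R => y * x = y)).card ≤ n →
      x ≠ 0 → ∃ a : R, IsRingAtom a ∧ a * x = a := by
    intro n
    induction n with
    | zero =>
      intro x hc hx
      exfalso
      have : x ∈ univ.filter (fun y : R => y * x = y) := by simp [BooleanRing.mul_self]
      have := Finset.card_pos.mpr ⟨x, this⟩
      omega
    | succ n ih =>
      intro x hc hx
      by_cases hax : IsRingAtom x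
      · exact ⟨x, hax, BooleanRing.mul_self x⟩
      · rw [IsRingAtom] at hax
        push_neg at hax
        obtain ⟨b, hbx, hb0, hbne⟩ := hax hx
        have hsub : (univ.filter (fun y : R => y * b = y)) ⊂
            (univ.filter (fun y : R => y * x = y)) := by
          refine ⟨?_, ?_⟩
          · intro y hy
            simp only [mem_filter, mem_univ, true_and] at hy ⊢
            calc y * x = y * b * x := by rw [hy]
            _ = y * (b * x) := by ring
            _ = y * b := by rw [hbx]
            _ = y := hy
          · intro h
            have hx' : x ∈ univ.filter (fun y : R => y * x = y) := by
              simp [BooleanRing.mul_self]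
            have hxb := h hx'
            simp only [mem_filter, mem_univ, true_and] at hxb
            exact hbne (by rw [← hbx, mul_comm, hxb])
        obtain ⟨a, ha, hab⟩ := ih b (by
          have := Finset.card_lt_card hsub
          omega) hb0
        exact ⟨a, ha, by
          calc a * x = a * b * x := by rw [hab]
          _ = a * (b * x) := by ring
          _ = a * b := by rw [hbx]
          _ = a := hab⟩
  intro x hx
  exact key _ x le_rfl hx

lemma atom_orth {a b : R} (ha : IsRingAtom a) (hb : IsRingAtom b) (hne : a ≠ b) :
    a * b = 0 := by
  have h1 : a * b * a = a * b := by
    calc a * b * a = a * a * b := by ring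
    _ = a * b := by rw [BooleanRing.mul_self]
  have h2 : a * b * b = a * b := by
    calc a * b * b = a * (b * b) := by ring
    _ = a * b := by rw [BooleanRing.mul_self]
  rcases ha.2 _ h1 with h | h
  · exact h
  · rcases hb.2 _ h2 with h' | h'
    · exact h'
    · exact absurd (h ▸ h') hne

lemma eq_zero_of_atoms (x : R) (h : ∀ a : R, IsRingAtom a → a * x = 0) : x = 0 := by
  by_contra hx
  obtain ⟨a, ha, hax⟩ := exists_atom_below x hx
  exact ha.1 (hax ▸ h a ha)

lemma atom_mul_sum [DecidableEq R] (a : {a : R // IsRingAtom a})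
    (s : Finset {a : R // IsRingAtom a}) :
    a.1 * ∑ b ∈ s, b.1 = if a ∈ s then a.1 else 0 := by
  rw [Finset.mul_sum]
  by_cases h : a ∈ s
  · rw [if_pos h]
    rw [Finset.sum_eq_single a
      (fun b hb hba => atom_orth a.2 b.2 (fun he => hba (Subtype.ext he).symm))
      (fun hh => absurd h hh)]
    exact BooleanRing.mul_self _
  · rw [if_neg h]
    exact Finset.sum_eq_zero fun b hb =>
      atom_orth a.2 b.2 (fun he => h (by rw [Subtype.ext he]; exact hb))

end Aux

/-- In a finite nontrivial Boolean ring of cardinality `2 ^ N`, there are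
exactly `N` logical primes. -/
theorem card_logical_primes (R : Type*) [BooleanRing R] [Fintype R]
    [Nontrivial R] (N : ℕ) (hcard : Fintype.card R = 2 ^ N) :
    Nat.card {p : R // IsLogicalPrime p} = N := by
  classical
  set A := {a : R // IsRingAtom a} with hA
  -- the bijection R ≃ Finset A
  have key : ∀ r : R, (∑ a ∈ Finset.univ.filter (fun a : A => a.1 * r = a.1), a.1) = r := by
    intro r
    have hz : ∀ a : R, IsRingAtom a →
        a * (r + ∑ b ∈ Finset.univ.filter (fun a : A => a.1 * r = a.1), b.1) = 0 := by
      intro a ha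
      rw [mul_add, atom_mul_sum ⟨a, ha⟩]
      by_cases h : (⟨a, ha⟩ : A) ∈ Finset.univ.filter (fun a : A => a.1 * r = a.1)
      · rw [if_pos h]
        simp only [Finset.mem_filter] at h
        rw [h.2, BooleanRing.add_self]
      · rw [if_neg h, add_zero]
        simp only [Finset.mem_filter, Finset.mem_univ, true_and] at h
        have h1 : a * r * a = a * r := by
          calc a * r * a = a * a * r := by ring
          _ = a * r := by rw [BooleanRing.mul_self]
        rcases ha.2 _ h1 with h' | h'
        · exact h'
        · exact absurd h' h
    have := eq_zero_of_atoms _ hz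
    exact ((BooleanRing.add_eq_zero' _ _).mp this).symm
  let e : R ≃ Finset A :=
    { toFun := fun r => Finset.univ.filter (fun a : A => a.1 * r = a.1)
      invFun := fun s => ∑ a ∈ s, a.1
      left_inv := key
      right_inv := by
        intro s
        ext a
        simp only [Finset.mem_filter, Finset.mem_univ, true_and]
        rw [atom_mul_sum]
        by_cases h : a ∈ s
        · simp [h]
        · simp only [h, if_neg h, iff_false]
          exact fun he => a.2.1 he.symm }
  have hcardA : Fintype.card R = 2 ^ Fintype.card A := by
    rw [Fintype.card_congr e, Fintype.card_finset]
  have hAN : Fintype.card A = N := by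
    have := hcardA.symm.trans hcard
    exact Nat.pow_right_injective le_rfl this
  -- primes ≃ atoms
  have hpa : ∀ p : R, 1 + (1 + p) = p := by
    intro p
    rw [← add_assoc, BooleanRing.add_self, zero_add]
  let f : {p : R // IsLogicalPrime p} ≃ A :=
    { toFun := fun p => ⟨1 + p.1, (isLogicalPrime_iff p.1).mp p.2⟩
      invFun := fun a => ⟨1 + a.1, (isLogicalPrime_iff (1 + a.1)).mpr (by rw [hpa]; exact a.2)⟩
      left_inv := fun p => Subtype.ext (hpa p.1)
      right_inv := fun a => Subtype.ext (hpa a.1) }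
  rw [Nat.card_congr f, Nat.card_eq_fintype_card, hAN]
end

section
/- Let R be a finite nontrivial Boolean ring. Every element a ∈ R has a unique decomposition into primes: there exists a unique finite set I of logical primes of R such that a equals the product of the elements of I (the empty product being 1, so a = 1 corresponds to I = ∅, and a = 0 corresponds to I = the set of all primes). -/
open scoped BooleanAlgebraOfBooleanRing

section Aux

variable {R : Type*} [BooleanRing R]

lemma BR.le_iff_mul (a b : R) : a ≤ b ↔ a * b = a := inf_eq_left.symm

lemma BR.isLogicalPrime_iff_isCoatom (p : R) : IsLogicalPrime p ↔ IsCoatom p := by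
  rw [← isAtom_compl]
  have hcompl : (pᶜ : R) = 1 + p := rfl
  constructor
  · rintro ⟨hp1, hp⟩
    constructor
    · rw [hcompl]
      intro h
      have h0 : (1 : R) + p = 0 := h
      exact hp1 (by linear_combination -h0 + BooleanRing.add_self p)
    · intro b hb
      have hle : b * (1 + p) = b := (BR.le_iff_mul _ _).1 (le_of_lt (hcompl ▸ hb))
      have hpb : p * b = 0 := by linear_combination hle
      rcases hp b hpb with h0 | h1
      · exact h0
      · exact absurd (hcompl ▸ h1) (ne_of_lt hb)
  · rintro ⟨hne, hatom⟩
    constructor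
    · intro h
      apply hne
      show (1 : R) + p = 0
      rw [h]
      exact BooleanRing.add_self 1
    · intro b hpb
      rcases eq_or_lt_of_le (show b ≤ pᶜ by
        rw [BR.le_iff_mul, hcompl]; linear_combination hpb) with h | h
      · exact Or.inr (hcompl ▸ h.symm ▸ rfl)
      · exact Or.inl (hatom b h)

lemma BR.prod_eq_inf (I : Finset R) : (∏ p ∈ I, p) = I.inf id := by
  classical
  induction I using Finset.induction_on with
  | empty => rfl
  | insert _ _ h ih =>
      rw [Finset.prod_insert h, Finset.inf_insert, ih]
      rfl

/-- A coatom above a finite inf of coatoms is one of them. -/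
lemma BR.coatom_mem {q : R} (hq : IsCoatom q) (I : Finset R)
    (hI : ∀ p ∈ I, IsCoatom p) (h : I.inf id ≤ q) : q ∈ I := by
  by_contra hq_notin
  have key : ∀ p ∈ I, qᶜ ≤ p := by
    intro p hp
    have hpq : p ≠ q := fun he => hq_notin (he ▸ hp)
    have htop : p ⊔ q = ⊤ := by
      rcases eq_or_lt_of_le (le_sup_right : q ≤ p ⊔ q) with he | hlt
      · exfalso
        apply hpq
        have hple : p ≤ q := he ▸ le_sup_left
        rcases eq_or_lt_of_le hple with h' | h'
        · exact h'
        · exact absurd ((hI p hp).2 q h') hq.1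
      · exact hq.2 _ hlt
    calc qᶜ = qᶜ ⊓ (p ⊔ q) := by rw [htop, inf_top_eq]
      _ = (qᶜ ⊓ p) ⊔ (qᶜ ⊓ q) := inf_sup_left _ _ _
      _ = qᶜ ⊓ p := by rw [inf_comm (qᶜ) q, inf_compl_eq_bot, sup_bot_eq]
      _ ≤ p := inf_le_right
  have h1 : qᶜ ≤ q := le_trans (Finset.le_inf key) h
  have h2 : qᶜ = ⊥ := by
    have := inf_eq_left.2 h1
    rw [compl_inf_eq_bot] at this
    exact this.symm
  exact hq.1 (compl_eq_bot.1 h2)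

/-- In a finite Boolean ring, every element is the inf of the coatoms above it. -/
lemma BR.eq_inf_coatoms [Fintype R] (a : R)
    [DecidablePred fun p : R => IsCoatom p ∧ a * p = a] :
    (Finset.univ.filter (fun p : R => IsCoatom p ∧ a * p = a)).inf id = a := by
  set I := Finset.univ.filter (fun p : R => IsCoatom p ∧ a * p = a) with hI
  have hle : a ≤ I.inf id := by
    apply Finset.le_inf
    intro p hp
    rw [hI, Finset.mem_filter] at hp
    exact (BR.le_iff_mul a p).2 hp.2.2
  refine le_antisymm ?_ hle
  by_contra hcon
  have hne : I.inf id ⊓ aᶜ ≠ ⊥ := by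
    intro h
    apply hcon
    calc I.inf id = I.inf id ⊓ (aᶜ ⊔ a) := by rw [compl_sup_eq_top, inf_top_eq]
      _ = (I.inf id ⊓ aᶜ) ⊔ (I.inf id ⊓ a) := inf_sup_left _ _ _
      _ ≤ a := by rw [h, bot_sup_eq]; exact inf_le_right
  obtain ⟨x, hx, hxle⟩ :=
    (eq_bot_or_exists_atom_le (I.inf id ⊓ aᶜ)).resolve_left hne
  have hxc : IsCoatom xᶜ := hx.compl
  have haxc : a ≤ xᶜ := by
    have hxa : x ≤ aᶜ := hxle.trans inf_le_right
    exact le_compl_iff_le_compl.1 hxa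
  have hmem : xᶜ ∈ I := by
    rw [hI, Finset.mem_filter]
    exact ⟨Finset.mem_univ _, hxc, (BR.le_iff_mul a xᶜ).1 haxc⟩
  have hxx : x ≤ xᶜ := hxle.trans (le_trans inf_le_left (Finset.inf_le hmem))
  have : x = ⊥ := by
    have := inf_eq_left.2 hxx
    rw [inf_compl_eq_bot] at this
    exact this.symm
  exact hx.1 this

end Aux

/-- Every element of a finite nontrivial Boolean ring has a unique
decomposition as a product of logical primes. -/
theorem unique_prime_factorization (R : Type*) [BooleanRing R] [Fintype R]
    [Nontrivial R] [DecidableEq R] (a : R) :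
    ∃! I : Finset R, (∀ p ∈ I, IsLogicalPrime p) ∧ a = ∏ p ∈ I, p := by
  classical
  refine ⟨Finset.univ.filter (fun p : R => IsCoatom p ∧ a * p = a), ⟨?_, ?_⟩, ?_⟩
  · intro p hp
    rw [Finset.mem_filter] at hp
    exact (BR.isLogicalPrime_iff_isCoatom p).2 hp.2.1
  · rw [BR.prod_eq_inf, BR.eq_inf_coatoms]
  · rintro J ⟨hJprime, hJprod⟩
    have hJco : ∀ p ∈ J, IsCoatom p := fun p hp =>
      (BR.isLogicalPrime_iff_isCoatom p).1 (hJprime p hp)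
    have hainf : a = J.inf id := by rw [hJprod, BR.prod_eq_inf]
    ext p
    rw [Finset.mem_filter]
    constructor
    · intro hp
      refine ⟨Finset.mem_univ _, hJco p hp, ?_⟩
      have : a ≤ p := hainf ▸ Finset.inf_le hp
      exact (BR.le_iff_mul a p).1 this
    · rintro ⟨-, hco, hmul⟩
      exact BR.coatom_mem hco J hJco (hainf ▸ (BR.le_iff_mul a p).2 hmul)
end

section
/- Let R be a finite nontrivial Boolean ring. Every element a ∈ R has a unique representation as a sum of negated primes: there exists a unique finite set J of logical primes of R such that a = ∑_{p ∈ J} (1 + p). -/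
open BooleanRing Finset

section Aux

variable {R : Type*} [BooleanRing R]

/-- Atom in the multiplicative order of a Boolean ring. -/
def IsAtomE (e : R) : Prop := e ≠ 0 ∧ ∀ x : R, x * e = x → x = 0 ∨ x = e

lemma one_add_one_eq_zero : (1 : R) + 1 = 0 := add_self 1

lemma add_add_cancel_bool (a b : R) : a + (a + b) = b := by
  rw [← add_assoc, add_self, zero_add]

lemma one_add_ne_zero {p : R} (hp : p ≠ 1) : (1 : R) + p ≠ 0 := by
  intro h
  apply hp
  have := add_add_cancel_bool (1 : R) p
  rw [h, add_zero] at this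
  exact this.symm

lemma isLogicalPrime_iff_atom (p : R) : IsLogicalPrime p ↔ IsAtomE (1 + p) := by
  constructor
  · rintro ⟨hp1, hp⟩
    refine ⟨one_add_ne_zero hp1, fun x hx => ?_⟩
    apply hp
    have h1 : x * (1 + p) = x + x * p := by ring
    rw [h1] at hx
    have h2 : x + x * p = x + 0 := by rw [add_zero]; exact hx
    rw [mul_comm]
    exact add_left_cancel h2
  · rintro ⟨he0, he⟩
    constructor
    · intro h; apply he0; rw [h]; exact add_self 1
    · intro x hx
      apply he
      have : x * (1 + p) = x + p * x := by ring
      rw [this, hx, add_zero]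

lemma atom_mul_eq_zero {e f : R} (he : IsAtomE e) (hf : IsAtomE f) (hne : e ≠ f) :
    e * f = 0 := by
  have h1 : (e * f) * e = e * f := by
    rw [mul_comm, ← mul_assoc, mul_self]
  rcases he.2 _ h1 with h | h
  · exact h
  · -- e * f = e, so e ≤ f, hence e = f (using atom f), contradiction
    have h2 : e * f = e := h
    exfalso
    rcases hf.2 e h2 with h3 | h3
    · exact he.1 h3
    · exact hne h3

variable [Fintype R]

open scoped Classical

/-- The set of atoms below `a`. -/
noncomputable def atomsBelow (a : R) : Finset R :=
  Finset.univ.filter (fun e => IsAtomE e ∧ e * a = e)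

lemma mem_atomsBelow {a e : R} : e ∈ atomsBelow a ↔ IsAtomE e ∧ e * a = e := by
  simp [atomsBelow]

lemma exists_atom_below_s3 : ∀ n (a : R),
    (Finset.univ.filter (fun x : R => x * a = x)).card ≤ n → a ≠ 0 →
    ∃ e, IsAtomE e ∧ e * a = e := by
  intro n
  induction n with
  | zero =>
    intro a hcard ha
    exfalso
    have : a ∈ Finset.univ.filter (fun x : R => x * a = x) := by
      simp [mul_self]
    have := Finset.card_pos.mpr ⟨a, this⟩
    omega
  | succ n ih =>
    intro a hcard ha
    by_cases hat : IsAtomE a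
    · exact ⟨a, hat, mul_self a⟩
    · have : ∃ b : R, b * a = b ∧ b ≠ 0 ∧ b ≠ a := by
        unfold IsAtomE at hat
        push_neg at hat
        obtain ⟨b, hb1, hb2, hb3⟩ := hat ha
        exact ⟨b, hb1, hb2, hb3⟩
      obtain ⟨b, hba, hb0, hbna⟩ := this
      have hsub : Finset.univ.filter (fun x : R => x * b = x) ⊂
          Finset.univ.filter (fun x : R => x * a = x) := by
        constructor
        · intro x hx
          simp only [Finset.mem_filter, Finset.mem_univ, true_and] at hx ⊢
          rw [← hx, mul_assoc, hba, hx]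
        · intro hsub
          have : a ∈ Finset.univ.filter (fun x : R => x * b = x) := by
            apply hsub; simp [mul_self]
          simp only [Finset.mem_filter, Finset.mem_univ, true_and] at this
          apply hbna
          rw [← this, mul_comm, hba]
      have hcard' : (Finset.univ.filter (fun x : R => x * b = x)).card ≤ n := by
        have := Finset.card_lt_card hsub
        omega
      obtain ⟨e, he, heb⟩ := ih b hcard' hb0
      exact ⟨e, he, by rw [← heb, mul_assoc, hba, heb]⟩

lemma sum_atomsBelow : ∀ n (a : R), (atomsBelow a).card ≤ n →
    ∑ e ∈ atomsBelow a, e = a := by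
  intro n
  induction n with
  | zero =>
    intro a hcard
    by_cases ha : a = 0
    · subst ha
      have : atomsBelow (0 : R) = ∅ := by
        ext e
        simp only [mem_atomsBelow, Finset.notMem_empty, iff_false]
        rintro ⟨he, h0⟩
        rw [mul_zero] at h0
        exact he.1 h0.symm
      rw [this, Finset.sum_empty]
    · exfalso
      obtain ⟨e, he, hea⟩ := exists_atom_below_s3 (Fintype.card R) a
        (Finset.card_le_univ _) ha
      have : e ∈ atomsBelow a := mem_atomsBelow.mpr ⟨he, hea⟩
      have := Finset.card_pos.mpr ⟨e, this⟩
      omega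
  | succ n ih =>
    intro a hcard
    by_cases ha : a = 0
    · subst ha
      have : atomsBelow (0 : R) = ∅ := by
        ext e
        simp only [mem_atomsBelow, Finset.notMem_empty, iff_false]
        rintro ⟨he, h0⟩
        rw [mul_zero] at h0
        exact he.1 h0.symm
      rw [this, Finset.sum_empty]
    · obtain ⟨e, he, hea⟩ := exists_atom_below_s3 (Fintype.card R) a
        (Finset.card_le_univ _) ha
      set b := a + e with hb
      have hea' : e ∈ atomsBelow a := mem_atomsBelow.mpr ⟨he, hea⟩
      have hkey : atomsBelow b = (atomsBelow a).erase e := by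
        ext f
        simp only [mem_atomsBelow, Finset.mem_erase]
        constructor
        · rintro ⟨hf, hfb⟩
          have hfe : f ≠ e := by
            intro h
            subst h
            rw [hb, mul_add, hea, mul_self, add_self] at hfb
            exact hf.1 hfb.symm
          have hfe0 : f * e = 0 := atom_mul_eq_zero hf he hfe
          rw [hb, mul_add, hfe0, add_zero] at hfb
          exact ⟨hfe, hf, hfb⟩
        · rintro ⟨hfe, hf, hfa⟩
          have hfe0 : f * e = 0 := atom_mul_eq_zero hf he hfe
          refine ⟨hf, ?_⟩
          rw [hb, mul_add, hfe0, add_zero, hfa]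
      have hcard' : (atomsBelow b).card ≤ n := by
        rw [hkey]
        have := Finset.card_erase_of_mem hea'
        have hpos := Finset.card_pos.mpr ⟨e, hea'⟩
        omega
      have hsum : ∑ f ∈ atomsBelow b, f = b := ih b hcard'
      calc ∑ f ∈ atomsBelow a, f = e + ∑ f ∈ (atomsBelow a).erase e, f :=
            (Finset.add_sum_erase _ _ hea').symm
        _ = e + b := by rw [← hkey, hsum]
        _ = a := by rw [hb, add_comm a e, add_add_cancel_bool]

omit [Fintype R] in
lemma atom_mul_prime_sum {p : R} (hp : IsLogicalPrime p) (J : Finset R)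
    (hJ : ∀ q ∈ J, IsLogicalPrime q) :
    (1 + p) * ∑ q ∈ J, (1 + q) = if p ∈ J then 1 + p else 0 := by
  rw [Finset.mul_sum]
  have : ∀ q ∈ J, (1 + p) * (1 + q) = if q = p then 1 + p else 0 := by
    intro q hq
    split_ifs with h
    · subst h; exact mul_self _
    · exact atom_mul_eq_zero ((isLogicalPrime_iff_atom p).mp hp)
        ((isLogicalPrime_iff_atom q).mp (hJ q hq))
        (fun hc => h (add_left_cancel hc).symm)
  rw [Finset.sum_congr rfl this, Finset.sum_ite_eq' J p (fun _ => 1 + p)]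

end Aux

/-- Every element of a finite nontrivial Boolean ring has a unique
representation as a sum of negated logical primes. -/
theorem unique_negated_prime_sum (R : Type*) [BooleanRing R] [Fintype R]
    [Nontrivial R] [DecidableEq R] (a : R) :
    ∃! J : Finset R, (∀ p ∈ J, IsLogicalPrime p) ∧ a = ∑ p ∈ J, (1 + p) := by
  classical
  -- canonical witness: primes whose negation is an atom below a
  set J₀ : Finset R := (atomsBelow a).image (fun e => 1 + e) with hJ₀
  have hmem₀ : ∀ p, p ∈ J₀ ↔ IsAtomE (1 + p) ∧ (1 + p) * a = 1 + p := by
    intro p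
    simp only [hJ₀, Finset.mem_image, mem_atomsBelow]
    constructor
    · rintro ⟨e, ⟨he, hea⟩, rfl⟩
      rw [add_add_cancel_bool]
      exact ⟨he, hea⟩
    · rintro ⟨he, hea⟩
      exact ⟨1 + p, ⟨he, hea⟩, (add_add_cancel_bool 1 p)⟩
  have hprime₀ : ∀ p ∈ J₀, IsLogicalPrime p := by
    intro p hp
    exact (isLogicalPrime_iff_atom p).mpr ((hmem₀ p).mp hp).1
  have hsum₀ : a = ∑ p ∈ J₀, (1 + p) := by
    have hinj : ∀ x ∈ atomsBelow a, ∀ y ∈ atomsBelow a, (1 : R) + x = 1 + y → x = y :=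
      fun x _ y _ h => add_left_cancel h
    rw [hJ₀, Finset.sum_image hinj]
    have : ∀ e ∈ atomsBelow a, (1 : R) + (1 + e) = e := fun e _ => add_add_cancel_bool 1 e
    rw [Finset.sum_congr rfl this]
    exact (sum_atomsBelow (atomsBelow a).card a le_rfl).symm
  refine ⟨J₀, ⟨hprime₀, hsum₀⟩, ?_⟩
  -- uniqueness
  rintro J ⟨hJprime, hJsum⟩
  have key : ∀ (K : Finset R), (∀ q ∈ K, IsLogicalPrime q) → a = ∑ q ∈ K, (1 + q) →
      ∀ p, IsLogicalPrime p → (p ∈ K ↔ (1 + p) * a = 1 + p) := by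
    intro K hK hKsum p hp
    rw [hKsum, atom_mul_prime_sum hp K hK]
    constructor
    · intro h; simp [h]
    · intro h
      by_contra hc
      rw [if_neg hc] at h
      exact one_add_ne_zero hp.1 h.symm
  ext p
  by_cases hp : IsLogicalPrime p
  · rw [key J hJprime hJsum p hp, key J₀ hprime₀ hsum₀ p hp]
  · constructor
    · intro h; exact absurd (hJprime p h) hp
    · intro h; exact absurd (hprime₀ p h) hp
end

section
/- Let R be a finite nontrivial Boolean ring and let T : R → ℤ/2ℤ be a ring homomorphism. Then there is exactly one logical prime p of R with T(1 + p) = 1, and T(1 + q) = 0 for every logical prime q ≠ p. -/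
/-- For every ring homomorphism `T : R → ℤ/2ℤ` from a finite nontrivial
Boolean ring there is exactly one logical prime `p` with `T (1 + p) = 1`,
and `T (1 + q) = 0` for every other logical prime `q`. -/
theorem hom_picks_unique_prime (R : Type*) [BooleanRing R] [Fintype R]
    [Nontrivial R] (T : R →+* ZMod 2) :
    ∃! p : R, IsLogicalPrime p ∧ T (1 + p) = 1 ∧
      ∀ q : R, IsLogicalPrime q → q ≠ p → T (1 + q) = 0 := by
  classical
  have hz2 : ∀ z : ZMod 2, z = 0 ∨ z = 1 := by decide
  set S : Finset R := Finset.univ.filter (fun x : R => T x = 1) with hS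
  set e : R := ∏ x ∈ S, x with he
  have hTe : T e = 1 := by
    rw [he, map_prod]
    apply Finset.prod_eq_one
    intro x hx
    simpa [hS] using hx
  have hEa : ∀ a : R, T a = 1 → e * a = e := by
    intro a ha
    have haS : a ∈ S := by simp [hS, ha]
    have h1 : a * ∏ y ∈ S.erase a, y = ∏ y ∈ S, y := Finset.mul_prod_erase S id haS
    calc e * a = (a * ∏ y ∈ S.erase a, y) * a := by rw [he, h1]
    _ = (a * a) * ∏ y ∈ S.erase a, y := by ring
    _ = a * ∏ y ∈ S.erase a, y := by rw [BooleanRing.mul_self a]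
    _ = e := by rw [he, h1]
  have he0 : e ≠ 0 := by
    intro h; rw [h, map_zero] at hTe; exact zero_ne_one hTe
  have hatom : ∀ a : R, a * e = a → a = 0 ∨ a = e := by
    intro a ha
    rcases hz2 (T a) with hTa | hTa
    · left
      have hT1a : T (1 + a) = 1 := by rw [map_add, map_one, hTa, add_zero]
      have h1 : e * (1 + a) = e := hEa _ hT1a
      calc a = a * e := ha.symm
      _ = a * (e * (1 + a)) := by rw [h1]
      _ = a * e + (a * a) * e := by ring
      _ = a * e + a * e := by rw [BooleanRing.mul_self a]
      _ = 0 := BooleanRing.add_self _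
    · right
      have h1 : e * a = e := hEa a hTa
      calc a = a * e := ha.symm
      _ = e := by rw [mul_comm]; exact h1
  set p : R := 1 + e with hp
  have h1p : (1 : R) + p = e := by
    rw [hp, ← add_assoc, BooleanRing.add_self, zero_add]
  have hprime : IsLogicalPrime p := by
    constructor
    · intro h
      apply he0
      have : (1 : R) + p = 1 + 1 := by rw [h]
      rw [h1p, BooleanRing.add_self] at this; exact this
    · intro a ha
      have hae : a * e = a := by
        have : a + e * a = 0 := by
          have := ha
          rw [hp] at this
          calc a + e * a = (1 + e) * a := by ring
          _ = 0 := this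
        have h2 : a = e * a := by
          have := congrArg (· + e * a) this
          simpa [add_assoc, BooleanRing.add_self] using this
        rw [mul_comm]; exact h2.symm
      rcases hatom a hae with h | h
      · exact Or.inl h
      · right; rw [h, h1p]
  -- any logical prime q with T (1+q) = 1 equals p
  have hkey : ∀ q : R, IsLogicalPrime q → T (1 + q) = 1 → q = p := by
    intro q hq hTq
    set f : R := 1 + q with hf
    have hTef : T (e * f) = 1 := by rw [map_mul, hTe, hTq, one_mul]
    have hef0 : e * f ≠ 0 := by
      intro h; rw [h, map_zero] at hTef; exact zero_ne_one hTef
    have hefe : e * f = e := by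
      rcases hatom (e * f) (by calc e * f * e = (e * e) * f := by ring
        _ = e * f := by rw [BooleanRing.mul_self e]) with h | h
      · exact absurd h hef0
      · exact h
    have hqef : q * (e * f) = 0 := by
      calc q * (e * f) = e * (q + q * q) := by rw [hf]; ring
      _ = e * (q + q) := by rw [BooleanRing.mul_self q]
      _ = 0 := by rw [BooleanRing.add_self, mul_zero]
    rcases hq.2 _ hqef with h | h
    · exact absurd h hef0
    · -- e * f = 1 + q = f, so e = f
      have hef : e = f := by rw [← hefe, h, hf]
      rw [hp, hef, hf, ← add_assoc, BooleanRing.add_self, zero_add]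
  have hothers : ∀ q : R, IsLogicalPrime q → q ≠ p → T (1 + q) = 0 := by
    intro q hq hqp
    rcases hz2 (T (1 + q)) with h | h
    · exact h
    · exact absurd (hkey q hq h) hqp
  refine ⟨p, ⟨hprime, by rw [h1p]; exact hTe, hothers⟩, ?_⟩
  rintro p' ⟨hp', hTp', -⟩
  exact hkey p' hp' hTp'
end

section
/- Let R be a finite nontrivial Boolean ring with |R| = 2^N. Then the number of ring homomorphisms from R to ℤ/2ℤ is exactly N (equivalently, it equals the number of logical primes of R). -/
namespace Card2Aux

variable {R : Type*} [BooleanRing R]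

/-- A ring-theoretic atom: nonzero, and every multiple of it is `0` or itself. -/
def MAtom (e : R) : Prop := e ≠ 0 ∧ ∀ a : R, e * a = 0 ∨ e * a = e

theorem mAtom_one_add_iff (p : R) : MAtom (1 + p) ↔ IsLogicalPrime p := by
  constructor
  · rintro ⟨h0, h⟩
    refine ⟨fun hp => h0 (by rw [hp]; exact BooleanRing.add_self 1), fun a ha => ?_⟩
    have hmul : (1 + p) * a = a := by linear_combination ha
    rcases h a with h' | h'
    · exact Or.inl (hmul ▸ h')
    · exact Or.inr (hmul ▸ h')
  · rintro ⟨h1, h⟩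
    constructor
    · intro h0
      apply h1
      have := BooleanRing.add_eq_zero' (a := (1:R)) (b := p)
      exact (this.mp h0).symm
    · intro a
      have hp : p * ((1 + p) * a) = 0 := by
        have : p * (1 + p) = 0 := by
          have := BooleanRing.mul_one_add_self p; linear_combination this
        rw [← mul_assoc, this, zero_mul]
      rcases h _ hp with h' | h'
      · exact Or.inl h'
      · exact Or.inr h'

theorem orth {e e' : R} (he : MAtom e) (he' : MAtom e') (hne : e ≠ e') : e * e' = 0 := by
  rcases he.2 e' with h | h
  · exact h
  · rcases he'.2 e with h' | h'
    · rw [mul_comm] at h'; exact h'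
    · exact absurd (h.symm.trans (by rw [mul_comm] at h'; exact h')) hne

/-- In a finite Boolean ring, every nonzero element has an atom below it. -/
theorem exists_atom_le [Fintype R] : ∀ a : R, a ≠ 0 → ∃ e : R, MAtom e ∧ e * a = e := by
  classical
  have key : ∀ n : ℕ, ∀ a : R, (Finset.univ.filter fun x : R => x * a = x).card = n →
      a ≠ 0 → ∃ e : R, MAtom e ∧ e * a = e := by
    intro n
    induction n using Nat.strong_induction_on with
    | _ n ih =>
      intro a hn ha
      by_cases hatom : ∀ b : R, a * b = 0 ∨ a * b = a
      · exact ⟨a, ⟨ha, hatom⟩, BooleanRing.mul_self a⟩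
      · push_neg at hatom
        obtain ⟨b, hb0, hba⟩ := hatom
        set c := a * b with hc
        have hc0 : c ≠ 0 := hb0
        have hca : c * a = c := by
          rw [hc, mul_assoc, mul_comm b a, ← mul_assoc, BooleanRing.mul_self]
        have hsub : (Finset.univ.filter fun x : R => x * c = x) ⊆
            (Finset.univ.filter fun x : R => x * a = x) := by
          intro x hx
          simp only [Finset.mem_filter, Finset.mem_univ, true_and] at hx ⊢
          calc x * a = x * c * a := by rw [hx]
          _ = x * (c * a) := by rw [mul_assoc]
          _ = x * c := by rw [hca]
          _ = x := hx
        have hmem : a ∈ (Finset.univ.filter fun x : R => x * a = x) := by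
          simp [BooleanRing.mul_self]
        have hnot : a ∉ (Finset.univ.filter fun x : R => x * c = x) := by
          simp only [Finset.mem_filter, Finset.mem_univ, true_and]
          intro h
          apply hba
          calc a * b = c := rfl
          _ = c * a := hca.symm
          _ = a * c := mul_comm _ _
          _ = a := h
        have hlt : (Finset.univ.filter fun x : R => x * c = x).card < n := by
          rw [← hn]
          exact Finset.card_lt_card (Finset.ssubset_iff_of_subset hsub |>.mpr ⟨a, hmem, hnot⟩)
        obtain ⟨e, he, hec⟩ := ih _ hlt c rfl hc0
        exact ⟨e, he, by calc e * a = e * c * a := by rw [hec]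
          _ = e * (c * a) := mul_assoc _ _ _
          _ = e * c := by rw [hca]
          _ = e := hec⟩
  intro a ha
  exact key _ a rfl ha

theorem mul_factor (e a b : R) : e * (a * b) = (e * a) * (e * b) := by
  have : e * e = e := BooleanRing.mul_self e
  calc e * (a * b) = (e * e) * (a * b) := by rw [this]
  _ = (e * a) * (e * b) := by ring

open scoped Classical

/-- The ring hom to `ZMod 2` associated to an atom. -/
noncomputable def atomHom {e : R} (he : MAtom e) : R →+* ZMod 2 where
  toFun a := if e * a = e then 1 else 0
  map_one' := by simp
  map_mul' a b := by
    rcases he.2 a with h1 | h1 <;> rcases he.2 b with h2 | h2 <;>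
      simp [mul_factor e a b, h1, h2, (Ne.symm he.1 : (0:R) ≠ e), BooleanRing.mul_self]
  map_zero' := by simp [(Ne.symm he.1 : (0:R) ≠ e)]
  map_add' a b := by
    have hadd : e * (a + b) = e * a + e * b := by ring
    rcases he.2 a with h1 | h1 <;> rcases he.2 b with h2 | h2 <;>
      simp [hadd, h1, h2, (Ne.symm he.1 : (0:R) ≠ e), BooleanRing.add_self e] <;> decide

theorem atomHom_apply {e : R} (he : MAtom e) (a : R) :
    atomHom he a = if e * a = e then 1 else 0 := rfl

end Card2Aux

/-- A finite nontrivial Boolean ring of cardinality `2 ^ N` has exactly `N`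
ring homomorphisms to `ℤ/2ℤ` (as many as it has logical primes). -/
theorem card_homs_to_zmod_two (R : Type*) [BooleanRing R] [Fintype R]
    [Nontrivial R] (N : ℕ) (hcard : Fintype.card R = 2 ^ N) :
    Nat.card (R →+* ZMod 2) = N ∧
      Nat.card (R →+* ZMod 2) = Nat.card {p : R // IsLogicalPrime p} := by
  classical
  open Card2Aux in
  have zmodcases : ∀ x : ZMod 2, x = 0 ∨ x = 1 := by decide
  -- key: elements killed by all atoms are zero
  have hkill : ∀ a : R, (∀ e : {e : R // MAtom e}, (e : R) * a = 0) → a = 0 := by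
    intro a h
    by_contra ha
    obtain ⟨e, he, hea⟩ := exists_atom_le a ha
    have := h ⟨e, he⟩
    simp only at this
    rw [this] at hea
    exact he.1 hea.symm
  -- multiplying the sum of all atoms by an atom gives that atom
  have hsum_mul : ∀ e : {e : R // MAtom e}, (e : R) * (∑ e' : {e : R // MAtom e}, (e' : R)) = e := by
    intro e
    rw [Finset.mul_sum, Finset.sum_eq_single e]
    · exact BooleanRing.mul_self (e : R)
    · intro e' _ hne
      exact orth e.2 e'.2 (fun h => hne (Subtype.ext h.symm))
    · intro h; exact absurd (Finset.mem_univ e) h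
  -- the sum of all atoms is 1
  have hsum_one : (∑ e' : {e : R // MAtom e}, (e' : R)) = 1 := by
    set s := ∑ e' : {e : R // MAtom e}, (e' : R) with hs
    have : s + 1 = 0 := by
      apply hkill
      intro e
      have : (e : R) * (s + 1) = (e : R) * s + e := by ring
      rw [this, hsum_mul e, BooleanRing.add_self]
    have := (BooleanRing.add_eq_zero' (a := s) (b := 1)).mp (by linear_combination this)
    exact this
  -- the evaluation map R → (atoms → ZMod 2) is bijective
  have hφbij : Function.Bijective
      (fun a : R => fun e : {e : R // MAtom e} => atomHom e.2 a) := by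
    constructor
    · intro a b hab
      have : a + b = 0 := by
        apply hkill
        intro e
        rcases e.2.2 (a + b) with h | h
        · exact h
        · exfalso
          have h1 : atomHom e.2 a = atomHom e.2 b := congrFun hab e
          have h2 : atomHom e.2 (a + b) = 0 := by
            rw [map_add, h1, ← two_mul]
            rcases zmodcases (atomHom e.2 b) with h' | h' <;> rw [h'] <;> decide
          rw [atomHom_apply, if_pos h] at h2
          exact one_ne_zero h2
      have := (BooleanRing.add_eq_zero' (a := a) (b := b)).mp this
      exact this
    · intro f
      set a : R := ∑ e' ∈ Finset.univ.filter (fun e' : {e : R // MAtom e} => f e' = 1), (e' : R)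
        with haa
      refine ⟨a, ?_⟩
      funext e
      have hmul : (e : R) * a =
          if f e = 1 then (e : R) else 0 := by
        rw [haa]
        rw [Finset.mul_sum]
        by_cases hf : f e = 1
        · rw [Finset.sum_eq_single e, BooleanRing.mul_self, if_pos hf]
          · intro e' _ hne
            exact orth e.2 e'.2 (fun h => hne (Subtype.ext h.symm))
          · intro h
            exact absurd (Finset.mem_filter.mpr ⟨Finset.mem_univ e, hf⟩) h
        · rw [if_neg hf, Finset.sum_eq_zero]
          intro e' he'
          have : e ≠ e' := by
            rintro rfl
            exact hf (Finset.mem_filter.mp he').2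
          exact orth e.2 e'.2 (fun h => this (Subtype.ext h))
      show atomHom e.2 a = f e
      rw [atomHom_apply]
      by_cases hf : f e = 1
      · have hea : (e : R) * a = e := by rw [hmul, if_pos hf]
        rw [if_pos hea, hf]
      · have hea : (e : R) * a = 0 := by rw [hmul, if_neg hf]
        rw [hea, if_neg (fun h : (0:R) = e => e.2.1 h.symm)]
        rcases zmodcases (f e) with h' | h'
        · exact h'.symm
        · exact absurd h' hf
  -- every ring hom to ZMod 2 is an atomHom
  have hclass : ∀ f : R →+* ZMod 2, ∃ e : {e : R // MAtom e}, atomHom e.2 = f := by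
    intro f
    have hf1 : (∑ e : {e : R // MAtom e}, f e) = 1 := by
      rw [← map_sum, hsum_one, map_one]
    have : ∃ e : {e : R // MAtom e}, f e ≠ 0 := by
      by_contra h
      push_neg at h
      rw [Finset.sum_eq_zero (fun e _ => h e)] at hf1
      exact zero_ne_one hf1
    obtain ⟨e, hfe⟩ := this
    have hfe1 : f (e : R) = 1 := (zmodcases _).resolve_left hfe
    refine ⟨e, ?_⟩
    ext a
    rw [atomHom_apply]
    rcases e.2.2 a with h | h
    · rw [if_neg (fun h' : (e:R) * a = e => e.2.1 (by rw [h'] at h; exact h))]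
      have : f ((e : R) * a) = 0 := by rw [h, map_zero]
      rw [map_mul, hfe1, one_mul] at this
      exact this.symm
    · rw [if_pos h]
      have : f ((e : R) * a) = 1 := by rw [h, hfe1]
      rw [map_mul, hfe1, one_mul] at this
      exact this.symm
  -- atoms ≃ ring homs
  have hΦbij : Function.Bijective
      (fun e : {e : R // MAtom e} => atomHom (R := R) e.2) := by
    constructor
    · intro e e' h
      have h' : atomHom e.2 = atomHom e'.2 := h
      have h1 : atomHom e.2 (e' : R) = atomHom e'.2 (e' : R) := by rw [h']
      have h2 : atomHom e.2 (e : R) = atomHom e'.2 (e : R) := by rw [h']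
      rw [atomHom_apply, atomHom_apply, if_pos (BooleanRing.mul_self _)] at h1
      rw [atomHom_apply, atomHom_apply, if_pos (BooleanRing.mul_self _)] at h2
      have he1 : (e : R) * e' = e := by
        by_contra hc
        rw [if_neg hc] at h1
        exact one_ne_zero h1.symm
      have he2 : (e' : R) * e = e' := by
        by_contra hc
        rw [if_neg hc] at h2
        exact one_ne_zero h2
      exact Subtype.ext (by rw [← he1, mul_comm, he2])
    · intro f
      obtain ⟨e, he⟩ := hclass f
      exact ⟨e, he⟩
  have hcard1 : Nat.card (R →+* ZMod 2) = Nat.card {e : R // MAtom e} :=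
    (Nat.card_eq_of_bijective _ hΦbij).symm
  -- cardinality of atoms is N
  have hcard2 : Nat.card {e : R // MAtom e} = N := by
    have h1 : Nat.card R = Nat.card ({e : R // MAtom e} → ZMod 2) :=
      Nat.card_eq_of_bijective _ hφbij
    rw [Nat.card_fun, Nat.card_eq_fintype_card (α := R), hcard] at h1
    have : Nat.card (ZMod 2) = 2 := by simp [Nat.card_eq_fintype_card]
    rw [this] at h1
    exact (Nat.pow_right_injective (le_refl 2) h1).symm
  -- logical primes ≃ atoms
  have hprime : Nat.card {p : R // IsLogicalPrime p} = Nat.card {e : R // MAtom e} := by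
    apply Nat.card_eq_of_bijective
      (fun p => ⟨1 + (p : R), (mAtom_one_add_iff (p : R)).mpr p.2⟩)
    constructor
    · intro p q h
      have := Subtype.ext_iff.mp h
      simp only at this
      exact Subtype.ext (by linear_combination this)
    · intro e
      have hp : IsLogicalPrime (1 + (e : R)) := by
        rw [← mAtom_one_add_iff]
        have : (1 : R) + (1 + (e : R)) = e := by
          rw [← add_assoc, BooleanRing.add_self, zero_add]
        rw [this]
        exact e.2
      refine ⟨⟨1 + (e : R), hp⟩, Subtype.ext ?_⟩
      show (1 : R) + (1 + (e : R)) = e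
      rw [← add_assoc, BooleanRing.add_self, zero_add]
  refine ⟨by rw [hcard1, hcard2], by rw [hcard1, hprime]⟩
end
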